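/- arXiv:2401.05550 — 3 statements merged into one kernel-verified Lean document; each statement's English description precedes it below -/
import Mathlib

section
/- Failure of L^r(L^s)-integrability for the self-similar profile: let d ≥ 1, r, s ∈ (1,∞) and μ > 0 with 2/r + d/s < μ, let w : ℝ^d → ℂ be measurable with ‖w‖_{L^s(B_1)} > 0 (possibly +∞), and define ζ(t,x) = (1−t)^{−μ/2} e^{−(i/2) log(1−t)} w(x/(1−t)^{1/2}) for t ∈ [0,1). Then ∫_{1/2}^{1} (t ‖ζ(t,·)‖_{L^s(B_1)})^r dt = ∞. In particular, if η : ℝ^d → [0,1] is measurable with η = 1 on B_1 and u(t,x) = t ζ(t,x) η(x), then ∫₀¹ ‖u(t,·)‖_{L^s(ℝ^d)}^r dt = ∞. -/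
open MeasureTheory Set
open scoped ENNReal NNReal

private lemma lintA {a : ℝ} (ha : a ≤ -1) :
    ∫⁻ u in Ioo (0:ℝ) (1/2), ENNReal.ofReal (u ^ a) = ∞ := by
  by_contra h
  have hlt : ∫⁻ u in Ioo (0:ℝ) (1/2), ENNReal.ofReal (u ^ a) < ⊤ := lt_top_iff_ne_top.2 h
  have hmeas : AEStronglyMeasurable (fun u : ℝ => u ^ a) (volume.restrict (Ioo (0:ℝ) (1/2))) :=
    (measurable_id.pow_const a).aestronglyMeasurable
  have hnn : 0 ≤ᵐ[volume.restrict (Ioo (0:ℝ) (1/2))] fun u : ℝ => u ^ a := by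
    filter_upwards [ae_restrict_mem measurableSet_Ioo] with u hu
    exact Real.rpow_nonneg hu.1.le a
  have : IntegrableOn (fun u : ℝ => u ^ a) (Ioo (0:ℝ) (1/2)) :=
    ⟨hmeas, (hasFiniteIntegral_iff_ofReal hnn).2 hlt⟩
  rw [intervalIntegral.integrableOn_Ioo_rpow_iff (by norm_num)] at this
  linarith

private lemma lintB {a : ℝ} (ha : a ≤ -1) :
    ∫⁻ t in Ioo (1/2 : ℝ) 1, ENNReal.ofReal ((1 - t) ^ a) = ∞ := by
  have hmp : MeasurePreserving (fun u : ℝ => 1 - u) volume volume :=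
    Measure.measurePreserving_sub_left volume 1
  have hemb : MeasurableEmbedding (fun u : ℝ => 1 - u) :=
    (Homeomorph.subLeft (1:ℝ)).measurableEmbedding
  have hpre : (fun u : ℝ => 1 - u) ⁻¹' Ioo (1/2 : ℝ) 1 = Ioo (0:ℝ) (1/2) := by
    ext u; simp only [mem_preimage, mem_Ioo]
    constructor <;> intro h <;> constructor <;> linarith [h.1, h.2]
  have := hmp.setLIntegral_comp_preimage_emb hemb
    (fun t => ENNReal.ofReal ((1 - t) ^ a)) (Ioo (1/2 : ℝ) 1)
  rw [hpre] at this
  rw [← this]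
  simp only [sub_sub_cancel]
  exact lintA ha

private lemma lintC {d : ℕ} {g : EuclideanSpace ℝ (Fin d) → ℝ≥0∞} (hg : Measurable g)
    {l : ℝ} (hl : 0 < l) (hl1 : l ≤ 1) :
    ENNReal.ofReal (l ^ d) * ∫⁻ x in Metric.ball (0 : EuclideanSpace ℝ (Fin d)) 1, g x
      ≤ ∫⁻ x in Metric.ball (0 : EuclideanSpace ℝ (Fin d)) 1, g (l⁻¹ • x) := by
  have hpre : (fun x : EuclideanSpace ℝ (Fin d) => l⁻¹ • x) ⁻¹' Metric.ball 0 1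
      = Metric.ball (0 : EuclideanSpace ℝ (Fin d)) l := by
    ext x
    simp only [mem_preimage, Metric.mem_ball, dist_zero_right, norm_smul, norm_inv,
      Real.norm_eq_abs, abs_of_pos hl]
    rw [inv_mul_lt_iff₀ hl, mul_one]
  have hmap : Measure.map (fun x : EuclideanSpace ℝ (Fin d) => l⁻¹ • x) volume
      = ENNReal.ofReal (l ^ d) • (volume : Measure (EuclideanSpace ℝ (Fin d))) := by
    rw [Measure.map_addHaar_smul volume (inv_ne_zero hl.ne')]
    congr 1
    rw [finrank_euclideanSpace_fin, ← inv_pow, inv_inv, abs_of_pos (pow_pos hl d)]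
  have key : ∫⁻ x in Metric.ball (0 : EuclideanSpace ℝ (Fin d)) l, g (l⁻¹ • x)
      = ENNReal.ofReal (l ^ d) * ∫⁻ x in Metric.ball (0 : EuclideanSpace ℝ (Fin d)) 1, g x := by
    rw [← hpre, ← setLIntegral_map measurableSet_ball hg (measurable_const_smul l⁻¹), hmap]
    simp [lintegral_smul_measure]
  rw [← key]
  exact lintegral_mono_set (Metric.ball_subset_ball hl1)

/-- The self-similar profile `ζ(t,x) = (1-t)^{-μ/2} e^{-(i/2) log(1-t)} w(x/(1-t)^{1/2})`. -/
noncomputable def selfSimilar {d : ℕ} (μ : ℝ) (w : EuclideanSpace ℝ (Fin d) → ℂ)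
    (t : ℝ) (x : EuclideanSpace ℝ (Fin d)) : ℂ :=
  (((1 - t) ^ (-μ / 2) : ℝ) : ℂ) * Complex.exp (-(Complex.I / 2) * (Real.log (1 - t) : ℂ)) *
    w ((((1 - t) ^ ((1 : ℝ) / 2))⁻¹ : ℝ) • x)

/-- Failure of `L^r(L^s)`-integrability for the self-similar profile: if `2/r + d/s < μ` and
`‖w‖_{L^s(B_1)} > 0`, then `∫_{1/2}^1 (t ‖ζ(t,·)‖_{L^s(B_1)})^r dt = ∞`; in particular, for any
cut-off `η : ℝ^d → [0,1]` with `η = 1` on `B_1` and `u(t,x) = t ζ(t,x) η(x)` one has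
`∫_0^1 ‖u(t,·)‖_{L^s(ℝ^d)}^r dt = ∞`. -/
theorem failure_LrLs_selfSimilar (d : ℕ) (hd : 1 ≤ d) (r s μ : ℝ)
    (hr : 1 < r) (hs : 1 < s) (hμ : 0 < μ) (hcond : 2 / r + (d : ℝ) / s < μ)
    (w : EuclideanSpace ℝ (Fin d) → ℂ) (hw : Measurable w)
    (hwpos : 0 < ∫⁻ x in Metric.ball (0 : EuclideanSpace ℝ (Fin d)) 1, (‖w x‖₊ : ℝ≥0∞) ^ s) :
    (∫⁻ t in Ioo (1 / 2 : ℝ) 1,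
        (ENNReal.ofReal t *
          (∫⁻ x in Metric.ball (0 : EuclideanSpace ℝ (Fin d)) 1,
            (‖selfSimilar μ w t x‖₊ : ℝ≥0∞) ^ s) ^ (1 / s)) ^ r) = ∞ ∧
    ∀ η : EuclideanSpace ℝ (Fin d) → ℝ, Measurable η → (∀ x, η x ∈ Icc (0 : ℝ) 1) →
      (∀ x ∈ Metric.ball (0 : EuclideanSpace ℝ (Fin d)) 1, η x = 1) →
      (∫⁻ t in Ioo (0 : ℝ) 1,
        (∫⁻ x, (‖(t : ℂ) * selfSimilar μ w t x * (η x : ℂ)‖₊ : ℝ≥0∞) ^ s) ^ (r / s)) = ∞ := by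
  have hr0 : (0:ℝ) < r := by linarith
  have hs0 : (0:ℝ) < s := by linarith
  have hs' : s ≠ 0 := hs0.ne'
  set B := Metric.ball (0 : EuclideanSpace ℝ (Fin d)) 1 with hB
  set C := ∫⁻ x in B, (‖w x‖₊ : ℝ≥0∞) ^ s with hC
  set a : ℝ := -μ/2 + (d:ℝ)/(2*s) with ha
  set K : ℝ≥0∞ := ENNReal.ofReal ((1/2:ℝ)^r) * min (C ^ (r/s)) 1 with hK
  -- exponent bound
  have har : a * r ≤ -1 := by
    have h1 : a < -1/r := by
      have h2 : (d:ℝ)/(2*s) = (d/s)/2 := by ring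
      have h3 : -(1:ℝ)/r = -(2/r)/2 := by ring
      rw [ha, h2, h3]; linarith
    have := mul_lt_mul_of_pos_right h1 hr0
    rw [div_mul_cancel₀ (-1) hr0.ne'] at this
    linarith
  -- K is a positive finite constant
  have hCrs : C ^ (r/s) ≠ 0 := by
    rw [Ne, ENNReal.rpow_eq_zero_iff]
    push_neg
    constructor
    · intro h; exact absurd h hwpos.ne'
    · intro _; positivity
  have hK0 : K ≠ 0 := by
    rw [hK]
    apply mul_ne_zero
    · simp [ENNReal.ofReal_eq_zero]; positivity
    · exact (lt_min (pos_iff_ne_zero.2 hCrs) zero_lt_one).ne'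
  have hKtop : K ≠ ⊤ := by
    rw [hK]
    exact ENNReal.mul_ne_top ENNReal.ofReal_ne_top
      ((min_le_right _ _).trans_lt ENNReal.one_lt_top).ne
  -- divergence of lower bound
  have hdiv : ∫⁻ t in Ioo (1/2 : ℝ) 1, K * ENNReal.ofReal ((1 - t) ^ (a*r)) = ∞ := by
    rw [lintegral_const_mul' _ _ hKtop, lintB har, ENNReal.mul_top hK0]
  -- the key pointwise lower bound
  have hlow : ∀ t ∈ Ioo (1/2 : ℝ) 1, K * ENNReal.ofReal ((1 - t) ^ (a*r)) ≤
      (ENNReal.ofReal t * (∫⁻ x in B, (‖selfSimilar μ w t x‖₊ : ℝ≥0∞) ^ s) ^ (1/s)) ^ r := by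
    intro t ht
    obtain ⟨ht1, ht2⟩ := ht
    have hb : 0 < 1 - t := by linarith
    set b : ℝ := 1 - t with hbdef
    set l : ℝ := b ^ ((1:ℝ)/2) with hldef
    have hl : 0 < l := Real.rpow_pos_of_pos hb _
    have hl1 : l ≤ 1 := Real.rpow_le_one hb.le (by linarith) (by norm_num)
    set c : ℝ≥0∞ := ENNReal.ofReal (b ^ (-μ/2)) with hcdef
    -- pointwise norm identity
    have hexp : (‖Complex.exp (-(Complex.I / 2) * ((Real.log b : ℝ) : ℂ))‖₊ : ℝ≥0∞) = 1 := by
      have h1 : ‖Complex.exp (-(Complex.I / 2) * ((Real.log b : ℝ) : ℂ))‖ = 1 := by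
        rw [Complex.norm_exp]
        simp [Complex.mul_re]
      have h2 : ‖Complex.exp (-(Complex.I / 2) * ((Real.log b : ℝ) : ℂ))‖₊ = 1 :=
        NNReal.coe_injective (by rw [coe_nnnorm, h1, NNReal.coe_one])
      rw [h2, ENNReal.coe_one]
    have hnorm : ∀ x, (‖selfSimilar μ w t x‖₊ : ℝ≥0∞) ^ s
        = c ^ s * (‖w (l⁻¹ • x)‖₊ : ℝ≥0∞) ^ s := by
      intro x
      have h1 : (‖selfSimilar μ w t x‖₊ : ℝ≥0∞) = c * (‖w (l⁻¹ • x)‖₊ : ℝ≥0∞) := by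
        rw [selfSimilar, ← hbdef, ← hldef, nnnorm_mul, nnnorm_mul, ENNReal.coe_mul,
          ENNReal.coe_mul, hexp, mul_one, hcdef]
        congr 1
        rw [Complex.nnnorm_real]
        exact Real.enorm_eq_ofReal (Real.rpow_nonneg hb.le _)
      rw [h1, ENNReal.mul_rpow_of_nonneg _ _ hs0.le]
    have h1s : (0:ℝ) ≤ 1/s := (one_div_pos.2 hs0).le
    have hmw : Measurable fun x => (‖w (l⁻¹ • x)‖₊ : ℝ≥0∞) ^ s :=
      ((hw.comp (measurable_const_smul l⁻¹)).nnnorm.coe_nnreal_ennreal).pow_const s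
    have hInner : (∫⁻ x in B, (‖selfSimilar μ w t x‖₊ : ℝ≥0∞) ^ s)
        = c ^ s * ∫⁻ x in B, (‖w (l⁻¹ • x)‖₊ : ℝ≥0∞) ^ s := by
      simp_rw [hnorm]
      rw [lintegral_const_mul _ hmw]
    have hld : l ^ d = b ^ ((d:ℝ)/2) := by
      rw [hldef, ← Real.rpow_natCast (b ^ ((1:ℝ)/2)) d, ← Real.rpow_mul hb.le]
      congr 1
      ring
    have hJ : ENNReal.ofReal (b ^ ((d:ℝ)/2)) * C ≤ ∫⁻ x in B, (‖w (l⁻¹ • x)‖₊ : ℝ≥0∞) ^ s := by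
      have h := lintC (hw.nnnorm.coe_nnreal_ennreal.pow_const s) hl hl1
      rwa [hld, ← hB, ← hC] at h
    have e1 : (c ^ s) ^ ((1:ℝ)/s) = c := by
      rw [← ENNReal.rpow_mul c s (1/s), mul_one_div_cancel hs', ENNReal.rpow_one]
    have e2 : (ENNReal.ofReal (b ^ ((d:ℝ)/2))) ^ ((1:ℝ)/s)
        = ENNReal.ofReal (b ^ ((d:ℝ)/(2*s))) := by
      rw [ENNReal.ofReal_rpow_of_pos (Real.rpow_pos_of_pos hb _), ← Real.rpow_mul hb.le]
      congr 1
      ring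
    have e3 : c * ENNReal.ofReal (b ^ ((d:ℝ)/(2*s))) = ENNReal.ofReal (b ^ a) := by
      rw [hcdef, ← ENNReal.ofReal_mul (Real.rpow_nonneg hb.le _), ← Real.rpow_add hb]
    have heq : ENNReal.ofReal (b ^ a) * C ^ ((1:ℝ)/s)
        = (c ^ s * (ENNReal.ofReal (b ^ ((d:ℝ)/2)) * C)) ^ ((1:ℝ)/s) := by
      rw [ENNReal.mul_rpow_of_nonneg _ _ h1s, ENNReal.mul_rpow_of_nonneg _ _ h1s,
        e1, e2, ← mul_assoc, e3]
    have hCle : ENNReal.ofReal (1/2 : ℝ) * (ENNReal.ofReal (b ^ a) * C ^ ((1:ℝ)/s))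
        ≤ ENNReal.ofReal t * (∫⁻ x in B, (‖selfSimilar μ w t x‖₊ : ℝ≥0∞) ^ s) ^ (1/s) := by
      apply mul_le_mul'
      · exact ENNReal.ofReal_le_ofReal (by linarith)
      · rw [heq, hInner]
        exact ENNReal.rpow_le_rpow (mul_le_mul' le_rfl hJ) h1s
    have hfin := ENNReal.rpow_le_rpow hCle hr0.le
    refine le_trans ?_ hfin
    rw [ENNReal.mul_rpow_of_nonneg _ _ hr0.le, ENNReal.mul_rpow_of_nonneg _ _ hr0.le,
      ENNReal.ofReal_rpow_of_pos (by norm_num : (0:ℝ) < 1/2),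
      ENNReal.ofReal_rpow_of_pos (Real.rpow_pos_of_pos hb _),
      ← Real.rpow_mul hb.le, ← ENNReal.rpow_mul C (1/s) r,
      show (1:ℝ)/s * r = r/s by ring, hK]
    calc ENNReal.ofReal ((1/2:ℝ)^r) * min (C ^ (r/s)) 1 * ENNReal.ofReal (b ^ (a*r))
        ≤ ENNReal.ofReal ((1/2:ℝ)^r) * C ^ (r/s) * ENNReal.ofReal (b ^ (a*r)) := by
          gcongr
          exact min_le_left _ _
      _ = ENNReal.ofReal ((1/2:ℝ)^r) * (ENNReal.ofReal (b ^ (a*r)) * C ^ (r/s)) := by ring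
  -- combine the pointwise bound with the divergence
  have hmono : ∫⁻ t in Ioo (1/2 : ℝ) 1, K * ENNReal.ofReal ((1 - t) ^ (a*r))
      ≤ ∫⁻ t in Ioo (1/2 : ℝ) 1,
        (ENNReal.ofReal t * (∫⁻ x in B, (‖selfSimilar μ w t x‖₊ : ℝ≥0∞) ^ s) ^ (1/s)) ^ r := by
    refine lintegral_mono_ae ?_
    filter_upwards [ae_restrict_mem measurableSet_Ioo] with t ht using hlow t ht
  constructor
  · exact eq_top_iff.2 (hdiv ▸ hmono)
  · intro η hη hη01 hη1
    have hstep : ∀ t ∈ Ioo (1/2 : ℝ) 1,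
        (ENNReal.ofReal t * (∫⁻ x in B, (‖selfSimilar μ w t x‖₊ : ℝ≥0∞) ^ s) ^ (1/s)) ^ r
          ≤ (∫⁻ x, (‖(t : ℂ) * selfSimilar μ w t x * (η x : ℂ)‖₊ : ℝ≥0∞) ^ s) ^ (r / s) := by
      intro t ht
      have ht0 : (0:ℝ) ≤ t := by linarith [ht.1]
      have hrs : (0:ℝ) ≤ r/s := (div_pos hr0 hs0).le
      have hmζ : Measurable fun x => (‖selfSimilar μ w t x‖₊ : ℝ≥0∞) ^ s := by
        have hm : Measurable (selfSimilar μ w t) := by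
          unfold selfSimilar
          exact (hw.comp (measurable_const_smul _)).const_mul _
        exact hm.nnnorm.coe_nnreal_ennreal.pow_const s
      have hxeq : ∀ᵐ x ∂volume, x ∈ B →
          (‖(t : ℂ) * selfSimilar μ w t x * (η x : ℂ)‖₊ : ℝ≥0∞) ^ s
            = (ENNReal.ofReal t) ^ s * (‖selfSimilar μ w t x‖₊ : ℝ≥0∞) ^ s := by
        refine ae_of_all _ fun x hx => ?_
        rw [hη1 x hx]
        simp only [Complex.ofReal_one, mul_one, nnnorm_mul, ENNReal.coe_mul,
          Complex.nnnorm_real]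
        rw [show ((‖t‖₊ : ℝ≥0) : ℝ≥0∞) = ENNReal.ofReal t from Real.enorm_eq_ofReal ht0, ENNReal.mul_rpow_of_nonneg _ _ hs0.le]
      have hBle : (ENNReal.ofReal t) ^ s * (∫⁻ x in B, (‖selfSimilar μ w t x‖₊ : ℝ≥0∞) ^ s)
          ≤ ∫⁻ x, (‖(t : ℂ) * selfSimilar μ w t x * (η x : ℂ)‖₊ : ℝ≥0∞) ^ s := by
        calc (ENNReal.ofReal t) ^ s * (∫⁻ x in B, (‖selfSimilar μ w t x‖₊ : ℝ≥0∞) ^ s)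
            = ∫⁻ x in B, (ENNReal.ofReal t) ^ s * (‖selfSimilar μ w t x‖₊ : ℝ≥0∞) ^ s :=
              (lintegral_const_mul _ hmζ).symm
          _ = ∫⁻ x in B, (‖(t : ℂ) * selfSimilar μ w t x * (η x : ℂ)‖₊ : ℝ≥0∞) ^ s :=
              (setLIntegral_congr_fun_ae measurableSet_ball hxeq).symm
          _ ≤ ∫⁻ x, (‖(t : ℂ) * selfSimilar μ w t x * (η x : ℂ)‖₊ : ℝ≥0∞) ^ s :=
              setLIntegral_le_lintegral _ _
      have hexp2 : ((ENNReal.ofReal t) ^ s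
            * (∫⁻ x in B, (‖selfSimilar μ w t x‖₊ : ℝ≥0∞) ^ s)) ^ (r/s)
          = (ENNReal.ofReal t * (∫⁻ x in B, (‖selfSimilar μ w t x‖₊ : ℝ≥0∞) ^ s) ^ (1/s)) ^ r := by
        rw [ENNReal.mul_rpow_of_nonneg _ _ hrs, ENNReal.mul_rpow_of_nonneg _ _ hr0.le,
          ← ENNReal.rpow_mul, ← ENNReal.rpow_mul,
          show s * (r/s) = r by field_simp, show (1:ℝ)/s * r = r/s by ring]
      rw [← hexp2]
      exact ENNReal.rpow_le_rpow hBle hrs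
    have hge : ∫⁻ t in Ioo (1/2:ℝ) 1, K * ENNReal.ofReal ((1 - t) ^ (a*r))
        ≤ ∫⁻ t in Ioo (0:ℝ) 1,
            (∫⁻ x, (‖(t : ℂ) * selfSimilar μ w t x * (η x : ℂ)‖₊ : ℝ≥0∞) ^ s) ^ (r / s) := by
      refine le_trans ?_ (lintegral_mono'
        (Measure.restrict_mono (Ioo_subset_Ioo (by norm_num : (0:ℝ) ≤ 1/2) le_rfl) le_rfl) le_rfl)
      refine lintegral_mono_ae ?_
      filter_upwards [ae_restrict_mem measurableSet_Ioo] with t ht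
      exact le_trans (hlow t ht) (hstep t ht)
    exact eq_top_iff.2 (hdiv ▸ hge)
end

section
/- Uniform-in-time L² bound for the truncated solution: let d ≥ 2 and 0 < μ < d/2, and let w : ℝ^d → ℂ be measurable with |w(x)| ≤ M for |x| ≤ 1 and |w(x)| ≤ C₀ |x|^{−μ} for |x| ≥ 1, for some M, C₀ ≥ 0. Let η : ℝ^d → [0,1] be measurable with η = 0 outside B_2, and define u(t,x) = t (1−t)^{−μ/2} e^{−(i/2) log(1−t)} w(x/(1−t)^{1/2}) η(x) for t ∈ [0,1). Then sup_{t∈[0,1)} ‖u(t,·)‖_{L²(ℝ^d)} < ∞. -/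
open MeasureTheory Set
open scoped ENNReal NNReal

lemma finite_sing_integral (d : ℕ) (ν : ℝ) (hν : 0 < ν) (hνd : ν < d) :
    ∫⁻ x : EuclideanSpace ℝ (Fin d),
      (Metric.closedBall (0 : EuclideanSpace ℝ (Fin d)) 2).indicator
        (fun x => ENNReal.ofReal (‖x‖ ^ (-ν))) x < ∞ := by
  set E := EuclideanSpace ℝ (Fin d)
  set f : E → ℝ := (Metric.closedBall (0 : E) 2).indicator (fun x => ‖x‖ ^ (-ν)) with hf
  have hf_nn : ∀ x, 0 ≤ f x := fun x =>
    Set.indicator_nonneg (fun y _ => Real.rpow_nonneg (norm_nonneg y) _) x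
  have hf_m : Measurable f :=
    Measurable.indicator (by fun_prop) measurableSet_closedBall
  have hrw : ∀ x : E, (Metric.closedBall (0 : E) 2).indicator
      (fun x => ENNReal.ofReal (‖x‖ ^ (-ν))) x = ENNReal.ofReal (f x) := by
    intro x
    by_cases hx : x ∈ Metric.closedBall (0 : E) 2 <;> simp [hf, Set.indicator_apply, hx]
  rw [lintegral_congr hrw]
  rw [lintegral_eq_lintegral_meas_le volume (Filter.Eventually.of_forall hf_nn) hf_m.aemeasurable]
  have hsub2 : ∀ t : ℝ, 0 < t → {a : E | t ≤ f a} ⊆ Metric.closedBall (0 : E) 2 := by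
    intro t ht a ha
    by_contra hc
    simp only [mem_setOf_eq, hf] at ha
    rw [Set.indicator_of_notMem hc] at ha
    linarith
  have key : ∀ t : ℝ, 1 < t →
      volume {a : E | t ≤ f a}
        ≤ ENNReal.ofReal (t ^ (-((d : ℝ)/ν))) * volume (Metric.ball (0 : EuclideanSpace ℝ (Fin d)) 1) := by
    intro t ht
    have ht0 : (0:ℝ) < t := by linarith
    have hsub : {a : E | t ≤ f a} ⊆ Metric.closedBall (0 : E) (t ^ (-ν)⁻¹) := by
      intro a ha
      have haball := hsub2 t ht0 ha
      have ha' : t ≤ ‖a‖ ^ (-ν) := by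
        simpa [hf, Set.indicator_of_mem haball] using ha
      have hane : a ≠ 0 := by
        rintro rfl
        rw [norm_zero, Real.zero_rpow (by linarith : -ν ≠ 0)] at ha'
        linarith
      have hna : 0 < ‖a‖ := norm_pos_iff.2 hane
      rw [mem_closedBall_zero_iff]
      exact (Real.le_rpow_inv_iff_of_neg hna ht0 (by linarith : -ν < 0)).2 ha'
    calc volume {a : E | t ≤ f a} ≤ volume (Metric.closedBall (0 : E) (t ^ (-ν)⁻¹)) :=
          measure_mono hsub
      _ = ENNReal.ofReal ((t ^ (-ν)⁻¹) ^ (Module.finrank ℝ E))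
            * volume (Metric.ball (0 : EuclideanSpace ℝ (Fin d)) 1) :=
          Measure.addHaar_closedBall _ _ (Real.rpow_nonneg ht0.le _)
      _ = ENNReal.ofReal (t ^ (-((d : ℝ)/ν))) * volume (Metric.ball (0 : EuclideanSpace ℝ (Fin d)) 1) := by
          congr 1
          rw [finrank_euclideanSpace_fin, ← Real.rpow_natCast (t ^ (-ν)⁻¹) d,
            ← Real.rpow_mul ht0.le]
          congr 1
          ring
  calc (∫⁻ t in Ioi (0:ℝ), volume {a : E | t ≤ f a})
      ≤ ∫⁻ t in Ioc (0:ℝ) 1 ∪ Ioi 1, volume {a : E | t ≤ f a} :=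
        lintegral_mono_set Ioi_subset_Ioc_union_Ioi
    _ ≤ (∫⁻ t in Ioc (0:ℝ) 1, volume {a : E | t ≤ f a})
        + ∫⁻ t in Ioi (1:ℝ), volume {a : E | t ≤ f a} := lintegral_union_le _ _ _
    _ < ∞ := by
        apply ENNReal.add_lt_top.2
        constructor
        · calc (∫⁻ t in Ioc (0:ℝ) 1, volume {a : E | t ≤ f a})
              ≤ ∫⁻ _ in Ioc (0:ℝ) 1, volume (Metric.closedBall (0 : EuclideanSpace ℝ (Fin d)) 2) :=
                setLIntegral_mono' measurableSet_Ioc fun t ht =>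
                  measure_mono (hsub2 t ht.1)
            _ = volume (Metric.closedBall (0 : EuclideanSpace ℝ (Fin d)) 2) * volume (Ioc (0:ℝ) 1) := by
                rw [setLIntegral_const]
            _ < ∞ := ENNReal.mul_lt_top measure_closedBall_lt_top (by simp)
        · calc (∫⁻ t in Ioi (1:ℝ), volume {a : E | t ≤ f a})
              ≤ ∫⁻ t in Ioi (1:ℝ),
                  ENNReal.ofReal (t ^ (-((d : ℝ)/ν))) * volume (Metric.ball (0 : EuclideanSpace ℝ (Fin d)) 1) :=
                setLIntegral_mono' measurableSet_Ioi fun t ht => key t ht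
            _ = (∫⁻ t in Ioi (1:ℝ), ENNReal.ofReal (t ^ (-((d : ℝ)/ν))))
                * volume (Metric.ball (0 : EuclideanSpace ℝ (Fin d)) 1) :=
                lintegral_mul_const' _ _ measure_ball_lt_top.ne
            _ < ∞ := ENNReal.mul_lt_top
                (IntegrableOn.setLIntegral_lt_top
                  (integrableOn_Ioi_rpow_of_lt (by
                    have : 1 < (d:ℝ)/ν := (one_lt_div hν).2 hνd
                    linarith) one_pos))
                measure_ball_lt_top

/-- Uniform-in-time `L²` bound for the truncated solution `u(t,x) = t ζ(t,x) η(x)`, where `w`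
is bounded on the unit ball and decays like `|x|^{-μ}` with `0 < μ < d/2`, and the cut-off `η`
vanishes outside `B_2`. -/
theorem uniform_L2_bound_truncated (d : ℕ) (hd : 2 ≤ d) (μ : ℝ) (hμ : 0 < μ)
    (hμd : μ < (d : ℝ) / 2) (M C₀ : ℝ) (hM : 0 ≤ M) (hC₀ : 0 ≤ C₀)
    (w : EuclideanSpace ℝ (Fin d) → ℂ) (hw : Measurable w)
    (hwM : ∀ x, ‖x‖ ≤ 1 → ‖w x‖ ≤ M)
    (hwdec : ∀ x : EuclideanSpace ℝ (Fin d), 1 ≤ ‖x‖ → ‖w x‖ ≤ C₀ * ‖x‖ ^ (-μ))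
    (η : EuclideanSpace ℝ (Fin d) → ℝ) (hη : Measurable η) (hη01 : ∀ x, η x ∈ Icc (0 : ℝ) 1)
    (hηsupp : ∀ x : EuclideanSpace ℝ (Fin d), 2 ≤ ‖x‖ → η x = 0) :
    ∃ K : ℝ, ∀ t ∈ Ico (0 : ℝ) 1,
      (∫⁻ x, (‖(t : ℂ) * selfSimilar μ w t x * (η x : ℂ)‖₊ : ℝ≥0∞) ^ (2 : ℝ)) ^ (1 / (2 : ℝ))
        ≤ ENNReal.ofReal K := by
  classical
  haveI : Nonempty (Fin d) := ⟨⟨0, by omega⟩⟩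
  haveI : Nontrivial (EuclideanSpace ℝ (Fin d)) := inferInstance
  set A : ℝ := M + C₀ with hA
  have hA0 : 0 ≤ A := by positivity
  set g : EuclideanSpace ℝ (Fin d) → ℝ≥0∞ := (Metric.closedBall (0 : EuclideanSpace ℝ (Fin d)) 2).indicator
    (fun x => ENNReal.ofReal (A^2 * ‖x‖ ^ (-(2*μ)))) with hg
  -- finiteness of the dominating integral
  have hgfin : (∫⁻ x, g x) < ∞ := by
    have h1 := finite_sing_integral d (2*μ) (by linarith) (by push_cast; linarith)
    calc (∫⁻ x, g x)
        ≤ ∫⁻ x, ENNReal.ofReal (A^2) * (Metric.closedBall (0 : EuclideanSpace ℝ (Fin d)) 2).indicator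
            (fun x => ENNReal.ofReal (‖x‖ ^ (-(2*μ)))) x := by
          refine lintegral_mono fun x => ?_
          by_cases hx : x ∈ Metric.closedBall (0 : EuclideanSpace ℝ (Fin d)) 2
          · rw [hg, Set.indicator_of_mem hx, Set.indicator_of_mem hx,
              ENNReal.ofReal_mul (by positivity)]
          · simp [hg, Set.indicator_of_notMem hx]
      _ = ENNReal.ofReal (A^2) * ∫⁻ x, (Metric.closedBall (0 : EuclideanSpace ℝ (Fin d)) 2).indicator
            (fun x => ENNReal.ofReal (‖x‖ ^ (-(2*μ)))) x :=
          lintegral_const_mul' _ _ ENNReal.ofReal_ne_top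
      _ < ∞ := ENNReal.mul_lt_top ENNReal.ofReal_lt_top h1
  -- pointwise bound on the norm, for x ≠ 0 in the ball
  have hptR : ∀ t, t ∈ Ico (0:ℝ) 1 → ∀ x : EuclideanSpace ℝ (Fin d), x ≠ 0 →
      ‖(t : ℂ) * selfSimilar μ w t x * (η x : ℂ)‖ ≤ A * ‖x‖ ^ (-μ) := by
    intro t ht x hx0
    obtain ⟨ht0, ht1⟩ := ht
    have h1t : (0:ℝ) < 1 - t := by linarith
    have hsq : (0:ℝ) < (1 - t) ^ ((1:ℝ)/2) := Real.rpow_pos_of_pos h1t _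
    set y : EuclideanSpace ℝ (Fin d) := (((1 - t) ^ ((1:ℝ)/2))⁻¹ : ℝ) • x with hy
    have hny : ‖y‖ = ((1 - t) ^ ((1:ℝ)/2))⁻¹ * ‖x‖ := by
      rw [hy, norm_smul, Real.norm_eq_abs, abs_of_pos (inv_pos.2 hsq)]
    have hnx : 0 < ‖x‖ := norm_pos_iff.2 hx0
    have hexp1 : ‖Complex.exp (-(Complex.I / 2) * ((Real.log (1 - t) : ℝ) : ℂ))‖ = 1 := by
      have heq : -(Complex.I / 2) * ((Real.log (1 - t) : ℝ) : ℂ)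
          = ((-(Real.log (1 - t)) / 2 : ℝ) : ℂ) * Complex.I := by
        push_cast; ring
      rw [heq, Complex.norm_exp_ofReal_mul_I]
    have hub : ‖(t : ℂ) * selfSimilar μ w t x * (η x : ℂ)‖
        ≤ (1 - t) ^ (-μ/2) * ‖w y‖ := by
      have hη1 : |η x| ≤ 1 := by
        have := hη01 x
        rw [abs_of_nonneg this.1]; exact this.2
      have hrn : (0:ℝ) ≤ (1 - t) ^ (-μ/2) := Real.rpow_nonneg h1t.le _
      simp only [selfSimilar, norm_mul, hexp1, mul_one, Complex.norm_real, Real.norm_eq_abs,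
        ← hy]
      calc |t| * (|(1 - t) ^ (-μ/2)| * ‖w y‖) * |η x|
          ≤ 1 * (|(1 - t) ^ (-μ/2)| * ‖w y‖) * 1 := by
            gcongr <;>
              first
                | positivity
                | (rw [abs_of_nonneg ht0]; exact ht1.le)
                | exact hη1
        _ = (1 - t) ^ (-μ/2) * ‖w y‖ := by
            rw [abs_of_nonneg hrn]; ring
    rcases le_or_gt ‖y‖ 1 with hcase | hcase
    · -- small y : use the M bound
      have hwy : ‖w y‖ ≤ M := hwM y hcase
      have hxle : ‖x‖ ≤ (1 - t) ^ ((1:ℝ)/2) := by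
        rw [hny, inv_mul_eq_div, div_le_one hsq] at hcase
        exact hcase
      have hmono : (1 - t) ^ (-μ/2) ≤ ‖x‖ ^ (-μ) := by
        have h1 : ((1 - t) ^ ((1:ℝ)/2)) ^ (-μ) ≤ ‖x‖ ^ (-μ) :=
          Real.rpow_le_rpow_of_nonpos hnx hxle (by linarith)
        have h2 : (1 - t) ^ (-μ/2) = ((1 - t) ^ ((1:ℝ)/2)) ^ (-μ) := by
          rw [← Real.rpow_mul h1t.le]
          congr 1
          ring
        rw [h2]; exact h1
      have hrnn : (0:ℝ) ≤ ‖x‖ ^ (-μ) := Real.rpow_nonneg (norm_nonneg x) _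
      calc ‖(t : ℂ) * selfSimilar μ w t x * (η x : ℂ)‖
          ≤ (1 - t) ^ (-μ/2) * ‖w y‖ := hub
        _ ≤ ‖x‖ ^ (-μ) * M := mul_le_mul hmono hwy (norm_nonneg _) hrnn
        _ ≤ A * ‖x‖ ^ (-μ) := by nlinarith
    · -- large y : use the decay bound
      have hwy : ‖w y‖ ≤ C₀ * ‖y‖ ^ (-μ) := hwdec y hcase.le
      have hyx : ‖y‖ ^ (-μ) = ((1 - t) ^ ((1:ℝ)/2)) ^ μ * ‖x‖ ^ (-μ) := by
        rw [hny, Real.mul_rpow (inv_nonneg.2 hsq.le) (norm_nonneg x)]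
        congr 1
        rw [Real.inv_rpow hsq.le, ← Real.rpow_neg hsq.le, neg_neg]
      have hc : (1 - t) ^ (-μ/2) * ((1 - t) ^ ((1:ℝ)/2)) ^ μ = 1 := by
        rw [← Real.rpow_mul h1t.le, ← Real.rpow_add h1t,
          show -μ/2 + 1/2 * μ = 0 by ring, Real.rpow_zero]
      have hrn : (0:ℝ) ≤ (1 - t) ^ (-μ/2) := Real.rpow_nonneg h1t.le _
      have hrnn : (0:ℝ) ≤ ‖x‖ ^ (-μ) := Real.rpow_nonneg (norm_nonneg x) _
      calc ‖(t : ℂ) * selfSimilar μ w t x * (η x : ℂ)‖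
          ≤ (1 - t) ^ (-μ/2) * ‖w y‖ := hub
        _ ≤ (1 - t) ^ (-μ/2) * (C₀ * (((1 - t) ^ ((1:ℝ)/2)) ^ μ * ‖x‖ ^ (-μ))) := by
            rw [← hyx]
            exact mul_le_mul_of_nonneg_left hwy hrn
        _ = C₀ * ‖x‖ ^ (-μ) * ((1 - t) ^ (-μ/2) * ((1 - t) ^ ((1:ℝ)/2)) ^ μ) := by ring
        _ = C₀ * ‖x‖ ^ (-μ) := by rw [hc, mul_one]
        _ ≤ A * ‖x‖ ^ (-μ) := by nlinarith
  -- pointwise bound on the squared integrand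
  have hpt : ∀ t, t ∈ Ico (0:ℝ) 1 → ∀ x : EuclideanSpace ℝ (Fin d), x ≠ 0 →
      (‖(t : ℂ) * selfSimilar μ w t x * (η x : ℂ)‖₊ : ℝ≥0∞) ^ (2 : ℝ) ≤ g x := by
    intro t ht x hx0
    by_cases hx2 : x ∈ Metric.closedBall (0 : EuclideanSpace ℝ (Fin d)) 2
    · rw [hg, Set.indicator_of_mem hx2, ← enorm_eq_nnnorm, ← ofReal_norm]
      calc (ENNReal.ofReal ‖(t : ℂ) * selfSimilar μ w t x * (η x : ℂ)‖) ^ (2:ℝ)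
          ≤ (ENNReal.ofReal (A * ‖x‖ ^ (-μ))) ^ (2:ℝ) :=
            ENNReal.rpow_le_rpow (ENNReal.ofReal_le_ofReal (hptR t ht x hx0)) (by norm_num)
        _ = ENNReal.ofReal ((A * ‖x‖ ^ (-μ)) ^ (2:ℝ)) :=
            ENNReal.ofReal_rpow_of_nonneg (by positivity) (by norm_num)
        _ = ENNReal.ofReal (A^2 * ‖x‖ ^ (-(2*μ))) := by
            congr 1
            rw [Real.mul_rpow hA0 (Real.rpow_nonneg (norm_nonneg x) _)]
            congr 1
            · rw [show (2:ℝ) = ((2:ℕ):ℝ) by norm_num, Real.rpow_natCast]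
            · rw [← Real.rpow_mul (norm_nonneg x)]
              congr 1
              ring
    · have hxn : 2 < ‖x‖ := by
        by_contra hcon
        exact hx2 (mem_closedBall_zero_iff.2 (not_lt.1 hcon))
      have hzero : η x = 0 := hηsupp x hxn.le
      rw [hg, Set.indicator_of_notMem hx2]
      simp [hzero, ENNReal.zero_rpow_of_pos (by norm_num : (0:ℝ) < 2)]
  -- dominate the integral
  have hbound : ∀ t, t ∈ Ico (0:ℝ) 1 →
      (∫⁻ x, (‖(t : ℂ) * selfSimilar μ w t x * (η x : ℂ)‖₊ : ℝ≥0∞) ^ (2 : ℝ))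
        ≤ ∫⁻ x, g x := by
    intro t ht
    refine lintegral_mono_ae ?_
    have h0 : (volume : Measure (EuclideanSpace ℝ (Fin d))) {(0 : EuclideanSpace ℝ (Fin d))} = 0 := measure_singleton 0
    filter_upwards [measure_eq_zero_iff_ae_notMem.mp h0] with x hx
    exact hpt t ht x (by simpa using hx)
  refine ⟨((∫⁻ x, g x) ^ (1/(2:ℝ))).toReal, fun t ht => ?_⟩
  have hne : (∫⁻ x, g x) ^ (1/(2:ℝ)) ≠ ⊤ :=
    (ENNReal.rpow_lt_top_of_nonneg (by norm_num) hgfin.ne).ne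
  rw [ENNReal.ofReal_toReal hne]
  exact ENNReal.rpow_le_rpow (hbound t ht) (by norm_num)
end

section
/- Square integrability of the solution and its gradient (Step 2 of the counterexample): let d ≥ 2 and 0 < μ < d/2. Let w : ℝ^d → ℂ be Lipschitz, continuously differentiable on ℝ^d∖{0}, and suppose |w(x)| ≤ C₀|x|^{−μ} and |∇w(x)| ≤ C₁|x|^{−1−μ} for all |x| ≥ 1, for some C₀, C₁ ≥ 0. Let η : ℝ^d → ℝ be smooth with 0 ≤ η ≤ 1, η = 1 on B_1 and η = 0 outside B_2. Define u(t,x) = t (1−t)^{−μ/2} e^{−(i/2) log(1−t)} w(x/(1−t)^{1/2}) η(x) for t ∈ (0,1), x ∈ ℝ^d. Then ∫₀¹ ∫_{ℝ^d} (|u(t,x)|² + |∇_x u(t,x)|²) dx dt < ∞, where ∇_x u is the (classical, defined for x ≠ 0 and extended arbitrarily at x = 0) spatial gradient. -/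
open MeasureTheory Set
open scoped ENNReal NNReal

set_option maxHeartbeats 2000000
set_option synthInstance.maxHeartbeats 400000

private lemma sq_bound' {G : Type*} [NormedAddCommGroup G] {z : G} {b : ℝ} (hb : ‖z‖ ≤ b) :
    (‖z‖₊ : ℝ≥0∞) ^ (2 : ℝ) ≤ ENNReal.ofReal (b ^ 2) := by
  have hb0 : 0 ≤ b := (norm_nonneg z).trans hb
  calc (‖z‖₊ : ℝ≥0∞) ^ (2 : ℝ) = (‖z‖₊ : ℝ≥0∞) ^ (2 : ℕ) := by
        rw [← ENNReal.rpow_natCast]; norm_num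
    _ ≤ (ENNReal.ofReal b) ^ (2 : ℕ) := by
        gcongr
        rw [← ENNReal.ofReal_coe_nnreal, coe_nnnorm]
        exact ENNReal.ofReal_le_ofReal hb
    _ = ENNReal.ofReal (b ^ 2) := (ENNReal.ofReal_pow hb0 2).symm

private lemma lintegral_ball_rpow_lt_top' (d : ℕ) {a R : ℝ} (ha0 : 0 < a)
    (had : a < d) (hR : 0 < R) :
    ∫⁻ x in Metric.ball (0 : EuclideanSpace ℝ (Fin d)) R, ENNReal.ofReal (‖x‖ ^ (-a)) < ∞ := by
  set ν := volume.restrict (Metric.ball (0 : EuclideanSpace ℝ (Fin d)) R) with hν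
  have hmble : AEMeasurable (fun x : EuclideanSpace ℝ (Fin d) => ‖x‖ ^ (-a)) ν := by
    have h0 : (Metric.ball (0 : EuclideanSpace ℝ (Fin d)) R \ {0} : Set (EuclideanSpace ℝ (Fin d)))
        =ᵐ[volume] Metric.ball (0 : EuclideanSpace ℝ (Fin d)) R :=
      diff_ae_eq_self.2 (measure_mono_null inter_subset_right (by
        have hd : 0 < d := by
          have : (0 : ℝ) < d := ha0.trans had
          exact_mod_cast this
        rw [← Metric.closedBall_zero, Measure.addHaar_closedBall _ _ le_rfl]
        simp [finrank_euclideanSpace_fin, zero_pow hd.ne']))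
    rw [hν, ← Measure.restrict_congr_set h0]
    refine ContinuousOn.aemeasurable ?_ (measurableSet_ball.diff (measurableSet_singleton 0))
    refine continuous_norm.continuousOn.rpow_const (fun x hx => Or.inl ?_)
    exact norm_ne_zero_iff.2 hx.2
  have hnn : 0 ≤ᵐ[ν] fun x : EuclideanSpace ℝ (Fin d) => ‖x‖ ^ (-a) :=
    ae_of_all _ fun x => Real.rpow_nonneg (norm_nonneg x) _
  rw [lintegral_eq_lintegral_meas_le ν hnn hmble]
  set T := R ^ (-a) with hT
  have hT0 : 0 < T := Real.rpow_pos_of_pos hR _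
  rw [← Ioc_union_Ioi_eq_Ioi hT0.le, lintegral_union measurableSet_Ioi Ioc_disjoint_Ioi_same]
  refine ENNReal.add_lt_top.mpr ⟨?_, ?_⟩
  · refine (setLIntegral_mono' (g := fun _ => volume (Metric.ball (0 : EuclideanSpace ℝ (Fin d)) R)) measurableSet_Ioc (fun t _ => ?_)).trans_lt ?_
    · exact (measure_mono (subset_univ _)).trans (by rw [Measure.restrict_apply_univ])
    · rw [setLIntegral_const]
      exact ENNReal.mul_lt_top measure_ball_lt_top (by simp)
  · have hle : ∀ t ∈ Ioi T, ν {x : EuclideanSpace ℝ (Fin d) | t ≤ ‖x‖ ^ (-a)} ≤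
        ENNReal.ofReal (t ^ (-(d : ℝ) / a)) * volume (Metric.ball (0 : EuclideanSpace ℝ (Fin d)) 1) := by
      intro t ht
      have ht0 : 0 < t := hT0.trans ht
      have hsub : {x : EuclideanSpace ℝ (Fin d) | t ≤ ‖x‖ ^ (-a)} ⊆
          Metric.closedBall 0 (t ^ (-1 / a)) := by
        intro x hx
        simp only [mem_setOf_eq] at hx
        rcases eq_or_ne x 0 with rfl | hx0
        · simp [Real.rpow_nonneg ht0.le]
        · have hxpos : 0 < ‖x‖ := norm_pos_iff.2 hx0
          rw [Metric.mem_closedBall, dist_zero_right]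
          have hnp : -1 / a ≤ 0 := by
            rw [neg_div]; exact neg_nonpos.2 (by positivity)
          calc ‖x‖ = (‖x‖ ^ (-a)) ^ (-1 / a) := by
                rw [← Real.rpow_mul (norm_nonneg x), show (-a) * (-1 / a) = 1 by field_simp]
                exact (Real.rpow_one _).symm
            _ ≤ t ^ (-1 / a) := Real.rpow_le_rpow_of_nonpos ht0 hx hnp
      refine le_trans (Measure.restrict_apply_le _ _) ?_
      refine le_trans (measure_mono hsub) ?_
      rw [Measure.addHaar_closedBall _ _ (Real.rpow_nonneg ht0.le _)]
      have heq : ((t ^ (-1 / a)) ^ Module.finrank ℝ (EuclideanSpace ℝ (Fin d)))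
          = t ^ (-(d : ℝ) / a) := by
        rw [finrank_euclideanSpace_fin, ← Real.rpow_natCast (t ^ (-1 / a)) d,
          ← Real.rpow_mul ht0.le]
        congr 1
        field_simp
      rw [heq]
    refine (setLIntegral_mono' measurableSet_Ioi hle).trans_lt ?_
    have hmg : AEMeasurable (fun t : ℝ => ENNReal.ofReal (t ^ (-(d : ℝ) / a)))
        (volume.restrict (Ioi T)) := by
      have : AEMeasurable (fun t : ℝ => t ^ (-(d : ℝ) / a)) (volume.restrict (Ioi T)) := by
        refine ContinuousOn.aemeasurable ?_ measurableSet_Ioi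
        exact continuousOn_id.rpow_const (fun t htt => Or.inl (hT0.trans htt).ne')
      exact this.ennreal_ofReal
    rw [lintegral_mul_const'' _ hmg]
    refine ENNReal.mul_lt_top ?_ measure_ball_lt_top
    have hlt : -(d : ℝ) / a < -1 := by
      rw [div_lt_iff₀ ha0]
      nlinarith
    have hint : IntegrableOn (fun t : ℝ => t ^ (-(d : ℝ) / a)) (Ioi T) :=
      integrableOn_Ioi_rpow_of_lt hlt hT0
    have h2 := hint.2
    rw [hasFiniteIntegral_iff_ofReal] at h2
    · exact h2
    · exact (ae_restrict_iff' measurableSet_Ioi).2 (ae_of_all _ fun t htt =>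
        Real.rpow_nonneg (hT0.trans htt).le _)

private lemma lintegral_Ioo_one_sub_rpow_lt_top' {β : ℝ} (hβ : -1 < β) :
    ∫⁻ t in Ioo (0 : ℝ) 1, ENNReal.ofReal ((1 - t) ^ β) < ∞ := by
  have h1 : IntervalIntegrable (fun x : ℝ => x ^ β) volume 0 1 :=
    intervalIntegral.intervalIntegrable_rpow' hβ
  have h2 := (h1.comp_sub_left 1).symm
  simp only [sub_zero, sub_self] at h2
  rw [intervalIntegrable_iff] at h2
  have h3 : IntegrableOn (fun x : ℝ => (1 - x) ^ β) (Ioo (0 : ℝ) 1) := by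
    refine h2.mono_set ?_
    rw [uIoc_of_le zero_le_one]
    exact Ioo_subset_Ioc_self
  have h4 := h3.2
  rw [hasFiniteIntegral_iff_ofReal] at h4
  · exact h4
  · exact (ae_restrict_iff' measurableSet_Ioo).2 (ae_of_all _ fun t htt =>
      Real.rpow_nonneg (by linarith [htt.2]) _)


/-- Square integrability of the truncated solution `u(t,x) = t ζ(t,x) η(x)` together with its
spatial gradient, for a Lipschitz profile `w` that is `C¹` away from the origin and decays like
`|x|^{-μ}` (with gradient decay `|x|^{-1-μ}`), where `0 < μ < d/2`. -/
theorem solution_and_gradient_square_integrable (d : ℕ) (hd : 2 ≤ d) (μ : ℝ) (hμ : 0 < μ)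
    (hμd : μ < (d : ℝ) / 2) (C₀ C₁ : ℝ) (hC₀ : 0 ≤ C₀) (hC₁ : 0 ≤ C₁)
    (w : EuclideanSpace ℝ (Fin d) → ℂ)
    (hwLip : ∃ L : ℝ, 0 ≤ L ∧ ∀ x y, ‖w x - w y‖ ≤ L * ‖x - y‖)
    (hwC1 : ContDiffOn ℝ 1 w ({0}ᶜ : Set (EuclideanSpace ℝ (Fin d))))
    (hwdec : ∀ x : EuclideanSpace ℝ (Fin d), 1 ≤ ‖x‖ → ‖w x‖ ≤ C₀ * ‖x‖ ^ (-μ))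
    (hgraddec : ∀ x : EuclideanSpace ℝ (Fin d), 1 ≤ ‖x‖ →
      ‖fderiv ℝ w x‖ ≤ C₁ * ‖x‖ ^ (-1 - μ))
    (η : EuclideanSpace ℝ (Fin d) → ℝ) (hη : ContDiff ℝ (⊤ : ℕ∞) η)
    (hη01 : ∀ x, η x ∈ Icc (0 : ℝ) 1)
    (hη1 : ∀ x ∈ Metric.ball (0 : EuclideanSpace ℝ (Fin d)) 1, η x = 1)
    (hη0 : ∀ x : EuclideanSpace ℝ (Fin d), 2 ≤ ‖x‖ → η x = 0) :
    (∫⁻ t in Ioo (0 : ℝ) 1, ∫⁻ x,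
        ((‖(t : ℂ) * selfSimilar μ w t x * (η x : ℂ)‖₊ : ℝ≥0∞) ^ (2 : ℝ) +
          (‖fderiv ℝ (fun y => (t : ℂ) * selfSimilar μ w t y * (η y : ℂ)) x‖₊ : ℝ≥0∞) ^ (2 : ℝ)))
      < ∞ := by
  classical
  obtain ⟨L, hL0, hLw⟩ := hwLip
  have hd0 : d ≠ 0 := by omega
  have hsing : volume ({(0 : EuclideanSpace ℝ (Fin d))} : Set (EuclideanSpace ℝ (Fin d))) = 0 := by
    rw [← Metric.closedBall_zero, Measure.addHaar_closedBall _ _ le_rfl]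
    simp [finrank_euclideanSpace_fin, zero_pow hd0]
  have hwLipW : LipschitzWith ⟨L, hL0⟩ w := by
    refine LipschitzWith.of_dist_le_mul fun x y => ?_
    rw [dist_eq_norm, dist_eq_norm]
    exact hLw x y
  have hfwL : ∀ y, ‖fderiv ℝ w y‖ ≤ L := fun y => by
    exact norm_fderiv_le_of_lipschitz ℝ hwLipW (x₀ := y)
  set M : ℝ := ‖w 0‖ + L with hMdef
  have hM0 : 0 ≤ M := add_nonneg (norm_nonneg _) hL0
  have hwM : ∀ y : EuclideanSpace ℝ (Fin d), ‖y‖ ≤ 1 → ‖w y‖ ≤ M := by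
    intro y hy
    have h1 : ‖w y - w 0‖ ≤ L * ‖y - 0‖ := hLw y 0
    rw [sub_zero] at h1
    have : ‖w y‖ ≤ ‖w 0‖ + ‖w y - w 0‖ := by
      calc ‖w y‖ = ‖w 0 + (w y - w 0)‖ := by ring_nf
        _ ≤ ‖w 0‖ + ‖w y - w 0‖ := norm_add_le _ _
    nlinarith [norm_nonneg y]
  -- cutoff bounds
  have hηd : Differentiable ℝ η := hη.differentiable (by simp)
  have hηfd0 : ∀ x : EuclideanSpace ℝ (Fin d), 2 ≤ ‖x‖ → fderiv ℝ η x = 0 := by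
    intro x hx
    refine IsLocalMin.fderiv_eq_zero ?_
    refine Filter.Eventually.of_forall fun y => ?_
    rw [hη0 x hx]
    exact (hη01 y).1
  obtain ⟨K₀, hK₀⟩ := (isCompact_closedBall (0 : EuclideanSpace ℝ (Fin d)) 2).exists_bound_of_continuousOn
      ((hη.continuous_fderiv (by simp)).continuousOn)
  set K : ℝ := max K₀ 0 with hKdef
  have hK0 : 0 ≤ K := le_max_right _ _
  have hηK : ∀ x, ‖fderiv ℝ η x‖ ≤ K := by
    intro x
    by_cases hx : ‖x‖ ≤ 2
    · exact (hK₀ x (by simpa [Metric.mem_closedBall, dist_zero_right] using hx)).trans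
        (le_max_left _ _)
    · rw [hηfd0 x (le_of_lt (lt_of_not_ge hx))]
      simpa using hK0
  -- exponents
  set amin : ℝ := min (2 + 2 * μ) (μ + (d : ℝ) / 2) with hamindef
  have ham0 : 0 < amin := lt_min (by linarith) (by linarith)
  have hamd : amin < (d : ℝ) := (min_le_right _ _).trans_lt (by
    have hd2 : (2 : ℝ) ≤ d := by exact_mod_cast hd
    linarith)
  have ham2μ : 2 * μ < amin := lt_min (by linarith) (by linarith)
  set γ : ℝ := (amin - 2 - 2 * μ) / 2 with hγdef
  have hγnp : γ ≤ 0 := by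
    have := min_le_left (2 + 2 * μ) (μ + (d : ℝ) / 2)
    rw [hγdef]; rw [hamindef]; linarith
  have hγ1 : -1 < γ := by rw [hγdef]; linarith
  set A₀ : ℝ := M ^ 2 + (M * K + L) ^ 2 with hA₀def
  have hA₀0 : 0 ≤ A₀ := by positivity
  set C₂ : ℝ := (2 * C₀ * K + C₁) ^ 2 with hC₂def
  have hC₂0 : 0 ≤ C₂ := by positivity
  -- spatial integral constants
  set I2 : ℝ≥0∞ := ∫⁻ x in Metric.ball (0 : EuclideanSpace ℝ (Fin d)) 2,
      ENNReal.ofReal (‖x‖ ^ (-(2 * μ))) with hI2def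
  set Ia : ℝ≥0∞ := ∫⁻ x in Metric.ball (0 : EuclideanSpace ℝ (Fin d)) 2,
      ENNReal.ofReal (‖x‖ ^ (-amin)) with hIadef
  have hI2 : I2 < ∞ := lintegral_ball_rpow_lt_top' d (by positivity)
      (by push_cast; nlinarith [(by exact_mod_cast hd : (2:ℝ) ≤ d)]) two_pos
  have hIa : Ia < ∞ := lintegral_ball_rpow_lt_top' d ham0 hamd two_pos
  set V : ℝ≥0∞ := volume (Metric.ball (0 : EuclideanSpace ℝ (Fin d)) 1) with hVdef
  have hV : V < ∞ := measure_ball_lt_top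
  -- the dominating function of t
  set g : ℝ → ℝ≥0∞ := fun t =>
      ENNReal.ofReal (A₀ * (1 - t) ^ ((d : ℝ) / 2 - μ - 1)) * V
      + ENNReal.ofReal (C₀ ^ 2) * I2
      + ENNReal.ofReal (C₂ * (1 - t) ^ γ) * Ia with hgdef
  have key : ∀ t ∈ Ioo (0 : ℝ) 1, (∫⁻ x,
        ((‖(t : ℂ) * selfSimilar μ w t x * (η x : ℂ)‖₊ : ℝ≥0∞) ^ (2 : ℝ) +
          (‖fderiv ℝ (fun y => (t : ℂ) * selfSimilar μ w t y * (η y : ℂ)) x‖₊ : ℝ≥0∞) ^ (2 : ℝ)))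
      ≤ g t := by
    intro t ht
    obtain ⟨ht0, ht1⟩ := ht
    have hs0 : (0 : ℝ) < 1 - t := by linarith
    set s : ℝ := 1 - t with hsdef
    have hs1 : s ≤ 1 := by rw [hsdef]; linarith
    set r : ℝ := s ^ ((1 : ℝ) / 2) with hrdef
    have hr0 : 0 < r := Real.rpow_pos_of_pos hs0 _
    have hr1 : r ≤ 1 := Real.rpow_le_one hs0.le hs1 (by norm_num)
    have hrinv1 : 1 ≤ r⁻¹ := (one_le_inv₀ hr0).2 hr1
    -- power calculus
    have hmul : ∀ p q : ℝ, s ^ p * s ^ q = s ^ (p + q) := fun p q =>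
      (Real.rpow_add hs0 p q).symm
    have hrpow : ∀ p : ℝ, r ^ p = s ^ (p / 2) := fun p => by
      rw [hrdef, ← Real.rpow_mul hs0.le]; congr 1; ring
    have hrinv : r⁻¹ = s ^ (-(1 : ℝ) / 2) := by
      rw [← Real.rpow_neg_one r, hrpow]
    have hsmulnorm : ∀ x : EuclideanSpace ℝ (Fin d), ‖r⁻¹ • x‖ = r⁻¹ * ‖x‖ := fun x => by
      rw [norm_smul, Real.norm_eq_abs, abs_of_pos (inv_pos.2 hr0)]
    have hsp : ∀ p : ℝ, 0 < s ^ p := fun p => Real.rpow_pos_of_pos hs0 p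
    -- the constant c and the function U
    set c : ℂ := (t : ℂ) * (((s ^ (-μ / 2) : ℝ)) : ℂ) *
        Complex.exp (-(Complex.I / 2) * ((Real.log s : ℝ) : ℂ)) with hcdef
    set U : EuclideanSpace ℝ (Fin d) → ℂ := fun y => c * w (r⁻¹ • y) * ((η y : ℝ) : ℂ) with hUdef
    have hueq : ∀ y, (t : ℂ) * selfSimilar μ w t y * ((η y : ℝ) : ℂ) = U y := by
      intro y
      rw [hUdef, hcdef, selfSimilar, ← hsdef, ← hrdef]
      ring
    have huf : (fun y => (t : ℂ) * selfSimilar μ w t y * ((η y : ℝ) : ℂ)) = U := funext hueq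
    have hcnorm : ‖c‖ ≤ s ^ (-μ / 2) := by
      have hre : ((-(Complex.I / 2)) * ((Real.log s : ℝ) : ℂ)).re = 0 := by
        simp [Complex.div_re]
      have hexp : ‖Complex.exp (-(Complex.I / 2) * ((Real.log s : ℝ) : ℂ))‖ = 1 := by
        rw [Complex.norm_exp, hre, Real.exp_zero]
      rw [hcdef, norm_mul, norm_mul, hexp, mul_one]
      have h1 : ‖((s ^ (-μ / 2) : ℝ) : ℂ)‖ = s ^ (-μ / 2) := by
        rw [Complex.norm_real, Real.norm_eq_abs, abs_of_pos (hsp _)]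
      have h2 : ‖((t : ℝ) : ℂ)‖ ≤ 1 := by
        rw [Complex.norm_real, Real.norm_eq_abs, abs_of_pos ht0]
        linarith
      rw [h1]
      calc ‖((t : ℝ) : ℂ)‖ * s ^ (-μ / 2) ≤ 1 * s ^ (-μ / 2) :=
            mul_le_mul_of_nonneg_right h2 (hsp _).le
        _ = s ^ (-μ / 2) := one_mul _
    -- norm of U
    have hub : ∀ x, ‖U x‖ ≤ s ^ (-μ / 2) * ‖w (r⁻¹ • x)‖ := by
      intro x
      have h1 : ‖((η x : ℝ) : ℂ)‖ ≤ 1 := by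
        rw [Complex.norm_real, Real.norm_eq_abs, abs_of_nonneg (hη01 x).1]
        exact (hη01 x).2
      rw [hUdef]
      calc ‖c * w (r⁻¹ • x) * ((η x : ℝ) : ℂ)‖ = ‖c‖ * ‖w (r⁻¹ • x)‖ * ‖((η x : ℝ) : ℂ)‖ := by
            rw [norm_mul, norm_mul]
        _ ≤ (s ^ (-μ / 2) * ‖w (r⁻¹ • x)‖) * 1 :=
            mul_le_mul (mul_le_mul_of_nonneg_right hcnorm (norm_nonneg _)) h1 (norm_nonneg _)
              (by positivity)
        _ = s ^ (-μ / 2) * ‖w (r⁻¹ • x)‖ := mul_one _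
    -- derivative of U away from 0
    set D : EuclideanSpace ℝ (Fin d) → (EuclideanSpace ℝ (Fin d) →L[ℝ] ℂ) := fun x =>
        (c * w (r⁻¹ • x)) • (Complex.ofRealCLM.comp (fderiv ℝ η x)) +
        ((η x : ℝ) : ℂ) • (c • ((fderiv ℝ w (r⁻¹ • x)).comp
          ((r⁻¹ : ℝ) • ContinuousLinearMap.id ℝ (EuclideanSpace ℝ (Fin d))))) with hDdef
    have hDer : ∀ x : EuclideanSpace ℝ (Fin d), x ≠ 0 → HasFDerivAt U (D x) x := by
      intro x hx
      have hx' : r⁻¹ • x ≠ 0 := smul_ne_zero (inv_ne_zero hr0.ne') hx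
      have hwd : DifferentiableAt ℝ w (r⁻¹ • x) :=
        (hwC1.contDiffAt (isOpen_compl_singleton.mem_nhds hx')).differentiableAt one_ne_zero
      have hinner : HasFDerivAt (fun y : EuclideanSpace ℝ (Fin d) => r⁻¹ • y)
          ((r⁻¹ : ℝ) • ContinuousLinearMap.id ℝ (EuclideanSpace ℝ (Fin d))) x :=
        (hasFDerivAt_id x).const_smul r⁻¹
      have hW : HasFDerivAt (fun y : EuclideanSpace ℝ (Fin d) => w (r⁻¹ • y))
          ((fderiv ℝ w (r⁻¹ • x)).comp
            ((r⁻¹ : ℝ) • ContinuousLinearMap.id ℝ (EuclideanSpace ℝ (Fin d)))) x :=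
        HasFDerivAt.comp x hwd.hasFDerivAt hinner
      have hηC : HasFDerivAt (fun y => ((η y : ℝ) : ℂ))
          (Complex.ofRealCLM.comp (fderiv ℝ η x)) x :=
        HasFDerivAt.comp x Complex.ofRealCLM.hasFDerivAt (hηd x).hasFDerivAt
      rw [hUdef, hDdef]
      exact (hW.const_mul c).mul hηC
    have hDf : ∀ x : EuclideanSpace ℝ (Fin d), x ≠ 0 → fderiv ℝ U x = D x := fun x hx =>
      (hDer x hx).fderiv
    -- norm bound on derivative
    have hDb : ∀ x : EuclideanSpace ℝ (Fin d), x ≠ 0 →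
        ‖fderiv ℝ U x‖ ≤ s ^ (-μ / 2) * ‖w (r⁻¹ • x)‖ * K
          + s ^ (-μ / 2) * ‖fderiv ℝ w (r⁻¹ • x)‖ * r⁻¹ := by
      intro x hx
      rw [hDf x hx]
      simp only [hDdef]
      have h1 : ‖(c * w (r⁻¹ • x)) • (Complex.ofRealCLM.comp (fderiv ℝ η x))‖
          ≤ s ^ (-μ / 2) * ‖w (r⁻¹ • x)‖ * K := by
        refine (norm_smul_le (α := ℂ)
          (β := EuclideanSpace ℝ (Fin d) →L[ℝ] ℂ) _ _).trans ?_
        rw [norm_mul]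
        have h2 : ‖Complex.ofRealCLM.comp (fderiv ℝ η x)‖ ≤ K := by
          refine (ContinuousLinearMap.opNorm_comp_le _ _).trans ?_
          rw [Complex.ofRealCLM_norm, one_mul]
          exact hηK x
        exact mul_le_mul (mul_le_mul_of_nonneg_right hcnorm (norm_nonneg _)) h2 (norm_nonneg _)
          (by positivity)
      have h2 : ‖((η x : ℝ) : ℂ) • (c • ((fderiv ℝ w (r⁻¹ • x)).comp
            ((r⁻¹ : ℝ) • ContinuousLinearMap.id ℝ (EuclideanSpace ℝ (Fin d)))))‖
          ≤ s ^ (-μ / 2) * ‖fderiv ℝ w (r⁻¹ • x)‖ * r⁻¹ := by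
        refine (norm_smul_le (α := ℂ)
          (β := EuclideanSpace ℝ (Fin d) →L[ℝ] ℂ) _ _).trans ?_
        have hS : ‖(r⁻¹ : ℝ) • ContinuousLinearMap.id ℝ (EuclideanSpace ℝ (Fin d))‖ ≤ r⁻¹ := by
          refine (norm_smul_le (α := ℝ)
            (β := EuclideanSpace ℝ (Fin d) →L[ℝ] EuclideanSpace ℝ (Fin d)) _ _).trans ?_
          rw [Real.norm_eq_abs, abs_of_pos (inv_pos.2 hr0)]
          calc r⁻¹ * ‖ContinuousLinearMap.id ℝ (EuclideanSpace ℝ (Fin d))‖ ≤ r⁻¹ * 1 :=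
                mul_le_mul_of_nonneg_left ContinuousLinearMap.norm_id_le (by positivity)
            _ = r⁻¹ := mul_one _
        have hcomp : ‖(fderiv ℝ w (r⁻¹ • x)).comp
              ((r⁻¹ : ℝ) • ContinuousLinearMap.id ℝ (EuclideanSpace ℝ (Fin d)))‖
            ≤ ‖fderiv ℝ w (r⁻¹ • x)‖ * r⁻¹ := by
          refine (ContinuousLinearMap.opNorm_comp_le _ _).trans ?_
          exact mul_le_mul_of_nonneg_left hS (norm_nonneg _)
        have hη1' : ‖((η x : ℝ) : ℂ)‖ ≤ 1 := by
          rw [Complex.norm_real, Real.norm_eq_abs, abs_of_nonneg (hη01 x).1]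
          exact (hη01 x).2
        calc ‖((η x : ℝ) : ℂ)‖ * ‖c • ((fderiv ℝ w (r⁻¹ • x)).comp
              ((r⁻¹ : ℝ) • ContinuousLinearMap.id ℝ (EuclideanSpace ℝ (Fin d))))‖
            ≤ 1 * (s ^ (-μ / 2) * (‖fderiv ℝ w (r⁻¹ • x)‖ * r⁻¹)) := by
              refine mul_le_mul hη1' ?_ (by positivity) (by norm_num)
              refine (norm_smul_le (α := ℂ)
                (β := EuclideanSpace ℝ (Fin d) →L[ℝ] ℂ) _ _).trans ?_
              exact mul_le_mul hcnorm hcomp (norm_nonneg _) (hsp _).le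
          _ = s ^ (-μ / 2) * ‖fderiv ℝ w (r⁻¹ • x)‖ * r⁻¹ := by ring
      exact (norm_add_le _ _).trans (add_le_add h1 h2)
    -- the master pointwise bound
    set F : EuclideanSpace ℝ (Fin d) → ℝ≥0∞ := fun x =>
      (‖U x‖₊ : ℝ≥0∞) ^ (2 : ℝ) + (‖fderiv ℝ U x‖₊ : ℝ≥0∞) ^ (2 : ℝ) with hFdef
    have hint : (∫⁻ x,
        ((‖(t : ℂ) * selfSimilar μ w t x * ((η x : ℝ) : ℂ)‖₊ : ℝ≥0∞) ^ (2 : ℝ) +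
          (‖fderiv ℝ (fun y => (t : ℂ) * selfSimilar μ w t y * ((η y : ℝ) : ℂ)) x‖₊ : ℝ≥0∞) ^ (2 : ℝ)))
        = ∫⁻ x, F x := by
      refine lintegral_congr fun x => ?_
      simp only [hFdef]
      rw [hueq x, huf]
    rw [hint]
    have hFmeas : Measurable F := by
      have hUc : Continuous U := by
        rw [hUdef]
        refine (continuous_const.mul ?_).mul ?_
        · exact hwLipW.continuous.comp (continuous_id.const_smul r⁻¹)
        · exact Complex.continuous_ofReal.comp hη.continuous
      refine Measurable.add ?_ ?_
      · exact ((hUc.measurable.nnnorm).coe_nnreal_ennreal).pow measurable_const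
      · exact (((measurable_fderiv ℝ U).nnnorm).coe_nnreal_ennreal).pow measurable_const
    set Ψ : EuclideanSpace ℝ (Fin d) → ℝ≥0∞ := fun x =>
      (Metric.closedBall (0 : EuclideanSpace ℝ (Fin d)) r).indicator
        (fun _ => ENNReal.ofReal (A₀ * s ^ (-μ - 1))) x
      + ENNReal.ofReal (C₀ ^ 2) * ENNReal.ofReal (‖x‖ ^ (-(2 * μ)))
      + ENNReal.ofReal (C₂ * s ^ γ) * ENNReal.ofReal (‖x‖ ^ (-amin)) with hΨdef
    have hFΨ : ∀ x : EuclideanSpace ℝ (Fin d), x ≠ 0 → ‖x‖ < 2 → F x ≤ Ψ x := by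
      intro x hx0 hx2
      by_cases hxr : ‖x‖ ≤ r
      · -- small region
        have hwb : ‖w (r⁻¹ • x)‖ ≤ M := by
          refine hwM _ ?_
          rw [hsmulnorm]
          calc r⁻¹ * ‖x‖ ≤ r⁻¹ * r := mul_le_mul_of_nonneg_left hxr (by positivity)
            _ = 1 := inv_mul_cancel₀ hr0.ne'
        have hU1 : ‖U x‖ ≤ s ^ (-μ / 2) * M :=
          (hub x).trans (mul_le_mul_of_nonneg_left hwb (hsp _).le)
        have hD1 : ‖fderiv ℝ U x‖ ≤ (M * K + L) * (s ^ (-μ / 2) * r⁻¹) := by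
          refine (hDb x hx0).trans ?_
          have h3 : s ^ (-μ / 2) ≤ s ^ (-μ / 2) * r⁻¹ := by
            nth_rewrite 1 [← mul_one (s ^ (-μ / 2))]
            exact mul_le_mul_of_nonneg_left hrinv1 (hsp _).le
          have e1 : s ^ (-μ / 2) * ‖w (r⁻¹ • x)‖ * K ≤ M * K * (s ^ (-μ / 2) * r⁻¹) := by
            calc s ^ (-μ / 2) * ‖w (r⁻¹ • x)‖ * K ≤ s ^ (-μ / 2) * M * K :=
                  mul_le_mul_of_nonneg_right (mul_le_mul_of_nonneg_left hwb (hsp _).le) hK0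
              _ ≤ (s ^ (-μ / 2) * r⁻¹) * M * K :=
                  mul_le_mul_of_nonneg_right (mul_le_mul_of_nonneg_right h3 hM0) hK0
              _ = M * K * (s ^ (-μ / 2) * r⁻¹) := by ring
          have e2 : s ^ (-μ / 2) * ‖fderiv ℝ w (r⁻¹ • x)‖ * r⁻¹ ≤ L * (s ^ (-μ / 2) * r⁻¹) := by
            calc s ^ (-μ / 2) * ‖fderiv ℝ w (r⁻¹ • x)‖ * r⁻¹ ≤ s ^ (-μ / 2) * L * r⁻¹ :=
                  mul_le_mul_of_nonneg_right
                    (mul_le_mul_of_nonneg_left (hfwL _) (hsp _).le) (by positivity)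
              _ = L * (s ^ (-μ / 2) * r⁻¹) := by ring
          calc s ^ (-μ / 2) * ‖w (r⁻¹ • x)‖ * K + s ^ (-μ / 2) * ‖fderiv ℝ w (r⁻¹ • x)‖ * r⁻¹
              ≤ M * K * (s ^ (-μ / 2) * r⁻¹) + L * (s ^ (-μ / 2) * r⁻¹) := add_le_add e1 e2
            _ = (M * K + L) * (s ^ (-μ / 2) * r⁻¹) := by ring
        have hsq1 : (s ^ (-μ / 2) * M) ^ 2 ≤ M ^ 2 * s ^ (-μ - 1) := by
          have hh : (s ^ (-μ / 2)) ^ 2 = s ^ (-μ) := by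
            rw [← Real.rpow_natCast (s ^ (-μ / 2)) 2, ← Real.rpow_mul hs0.le]
            norm_num
          calc (s ^ (-μ / 2) * M) ^ 2 = M ^ 2 * (s ^ (-μ / 2)) ^ 2 := by ring
            _ = M ^ 2 * s ^ (-μ) := by rw [hh]
            _ ≤ M ^ 2 * s ^ (-μ - 1) := by
                refine mul_le_mul_of_nonneg_left ?_ (sq_nonneg M)
                exact Real.rpow_le_rpow_of_exponent_ge hs0 hs1 (by linarith)
        have hsq2 : ((M * K + L) * (s ^ (-μ / 2) * r⁻¹)) ^ 2 ≤ (M * K + L) ^ 2 * s ^ (-μ - 1) := by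
          have h4 : (s ^ (-μ / 2) * r⁻¹) ^ 2 = s ^ (-μ - 1) := by
            rw [hrinv, hmul, ← Real.rpow_natCast (s ^ (-μ / 2 + -1 / 2)) 2,
              ← Real.rpow_mul hs0.le]
            congr 1; ring
          calc ((M * K + L) * (s ^ (-μ / 2) * r⁻¹)) ^ 2
              = (M * K + L) ^ 2 * (s ^ (-μ / 2) * r⁻¹) ^ 2 := by ring
            _ ≤ (M * K + L) ^ 2 * s ^ (-μ - 1) := by rw [h4]

        have hmem : x ∈ Metric.closedBall (0 : EuclideanSpace ℝ (Fin d)) r := by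
          simpa [Metric.mem_closedBall, dist_zero_right] using hxr
        have hstep : F x ≤ ENNReal.ofReal (A₀ * s ^ (-μ - 1)) := by
          simp only [hFdef]
          calc (‖U x‖₊ : ℝ≥0∞) ^ (2 : ℝ) + (‖fderiv ℝ U x‖₊ : ℝ≥0∞) ^ (2 : ℝ)
              ≤ ENNReal.ofReal ((s ^ (-μ / 2) * M) ^ 2)
                + ENNReal.ofReal (((M * K + L) * (s ^ (-μ / 2) * r⁻¹)) ^ 2) :=
                add_le_add (sq_bound' hU1) (sq_bound' hD1)
            _ ≤ ENNReal.ofReal (M ^ 2 * s ^ (-μ - 1))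
                + ENNReal.ofReal ((M * K + L) ^ 2 * s ^ (-μ - 1)) :=
                add_le_add (ENNReal.ofReal_le_ofReal hsq1) (ENNReal.ofReal_le_ofReal hsq2)
            _ = ENNReal.ofReal (A₀ * s ^ (-μ - 1)) := by
                rw [← ENNReal.ofReal_add (by positivity) (by positivity)]
                congr 1
                rw [hA₀def]; ring
        refine hstep.trans ?_
        simp only [hΨdef, indicator_of_mem hmem]
        exact le_add_right (le_add_right le_rfl)
      · -- far region
        push_neg at hxr
        have hxrle : r ≤ ‖x‖ := hxr.le
        have hxp : 0 < ‖x‖ := hr0.trans hxr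
        have harg : 1 ≤ ‖r⁻¹ • x‖ := by
          rw [hsmulnorm, ← inv_mul_cancel₀ hr0.ne']
          exact mul_le_mul_of_nonneg_left hxrle (by positivity)
        have keyE : ∀ e : ℝ, (r⁻¹ * ‖x‖) ^ e = s ^ (-e / 2) * ‖x‖ ^ e := by
          intro e
          rw [Real.mul_rpow (by positivity) (norm_nonneg x), hrinv, ← Real.rpow_mul hs0.le]
          congr 2
          ring
        have h5 := hwdec _ harg
        rw [hsmulnorm, keyE (-μ)] at h5
        have h6 := hgraddec _ harg
        rw [hsmulnorm, keyE (-1 - μ)] at h6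
        have hwfar : ‖U x‖ ≤ C₀ * ‖x‖ ^ (-μ) := by
          calc ‖U x‖ ≤ s ^ (-μ / 2) * ‖w (r⁻¹ • x)‖ := hub x
            _ ≤ s ^ (-μ / 2) * (C₀ * (s ^ (- -μ / 2) * ‖x‖ ^ (-μ))) :=
                mul_le_mul_of_nonneg_left h5 (hsp _).le
            _ = C₀ * (s ^ (-μ / 2) * s ^ (- -μ / 2)) * ‖x‖ ^ (-μ) := by ring
            _ = C₀ * ‖x‖ ^ (-μ) := by
                rw [hmul, show -μ / 2 + - -μ / 2 = 0 by ring, Real.rpow_zero, mul_one]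
        have hgfar : ‖fderiv ℝ U x‖ ≤ (2 * C₀ * K + C₁) * ‖x‖ ^ (-1 - μ) := by
          have hxμ : ‖x‖ ^ (-μ) ≤ 2 * ‖x‖ ^ (-1 - μ) := by
            have hh : ‖x‖ ^ (-μ) = ‖x‖ * ‖x‖ ^ (-1 - μ) := by
              calc ‖x‖ ^ (-μ) = ‖x‖ ^ (1 + (-1 - μ)) := by congr 1; ring
                _ = ‖x‖ ^ (1 : ℝ) * ‖x‖ ^ (-1 - μ) := Real.rpow_add hxp _ _
                _ = ‖x‖ * ‖x‖ ^ (-1 - μ) := by rw [Real.rpow_one]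
            rw [hh]
            exact mul_le_mul_of_nonneg_right hx2.le (Real.rpow_nonneg (norm_nonneg x) _)
          have e1 : s ^ (-μ / 2) * ‖w (r⁻¹ • x)‖ * K ≤ C₀ * K * ‖x‖ ^ (-μ) := by
            calc s ^ (-μ / 2) * ‖w (r⁻¹ • x)‖ * K
                ≤ s ^ (-μ / 2) * (C₀ * (s ^ (- -μ / 2) * ‖x‖ ^ (-μ))) * K :=
                  mul_le_mul_of_nonneg_right (mul_le_mul_of_nonneg_left h5 (hsp _).le) hK0
              _ = C₀ * K * (s ^ (-μ / 2) * s ^ (- -μ / 2)) * ‖x‖ ^ (-μ) := by ring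
              _ = C₀ * K * ‖x‖ ^ (-μ) := by
                  rw [hmul, show -μ / 2 + - -μ / 2 = 0 by ring, Real.rpow_zero, mul_one]
          have e2 : s ^ (-μ / 2) * ‖fderiv ℝ w (r⁻¹ • x)‖ * r⁻¹ ≤ C₁ * ‖x‖ ^ (-1 - μ) := by
            calc s ^ (-μ / 2) * ‖fderiv ℝ w (r⁻¹ • x)‖ * r⁻¹
                ≤ s ^ (-μ / 2) * (C₁ * (s ^ (-(-1 - μ) / 2) * ‖x‖ ^ (-1 - μ))) * r⁻¹ :=
                  mul_le_mul_of_nonneg_right (mul_le_mul_of_nonneg_left h6 (hsp _).le)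
                    (by positivity)
              _ = C₁ * (s ^ (-μ / 2) * s ^ (-(-1 - μ) / 2) * s ^ (-(1 : ℝ) / 2)) * ‖x‖ ^ (-1 - μ) := by
                  rw [hrinv]; ring
              _ = C₁ * ‖x‖ ^ (-1 - μ) := by
                  rw [hmul, hmul, show -μ / 2 + -(-1 - μ) / 2 + -(1 : ℝ) / 2 = 0 by ring,
                    Real.rpow_zero, mul_one]
          calc ‖fderiv ℝ U x‖
              ≤ s ^ (-μ / 2) * ‖w (r⁻¹ • x)‖ * K
                + s ^ (-μ / 2) * ‖fderiv ℝ w (r⁻¹ • x)‖ * r⁻¹ := hDb x hx0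
            _ ≤ C₀ * K * ‖x‖ ^ (-μ) + C₁ * ‖x‖ ^ (-1 - μ) := add_le_add e1 e2
            _ ≤ C₀ * K * (2 * ‖x‖ ^ (-1 - μ)) + C₁ * ‖x‖ ^ (-1 - μ) :=
                add_le_add (mul_le_mul_of_nonneg_left hxμ (by positivity)) le_rfl
            _ = (2 * C₀ * K + C₁) * ‖x‖ ^ (-1 - μ) := by ring
        have hsqw : (C₀ * ‖x‖ ^ (-μ)) ^ 2 = C₀ ^ 2 * ‖x‖ ^ (-(2 * μ)) := by
          rw [mul_pow, ← Real.rpow_natCast (‖x‖ ^ (-μ)) 2, ← Real.rpow_mul (norm_nonneg x)]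
          congr 2
          push_cast
          ring
        have hsqg : ((2 * C₀ * K + C₁) * ‖x‖ ^ (-1 - μ)) ^ 2 ≤ C₂ * (s ^ γ * ‖x‖ ^ (-amin)) := by
          have h7 : (‖x‖ ^ (-1 - μ)) ^ 2 = ‖x‖ ^ (-2 - 2 * μ) := by
            rw [← Real.rpow_natCast (‖x‖ ^ (-1 - μ)) 2, ← Real.rpow_mul (norm_nonneg x)]
            congr 1
            push_cast
            ring
          have hamle : amin ≤ 2 + 2 * μ := by rw [hamindef]; exact min_le_left _ _
          have h9 : ‖x‖ ^ (-2 - 2 * μ) = ‖x‖ ^ (amin - 2 - 2 * μ) * ‖x‖ ^ (-amin) := by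
            rw [← Real.rpow_add hxp]
            congr 1; ring
          have h10 : ‖x‖ ^ (amin - 2 - 2 * μ) ≤ r ^ (amin - 2 - 2 * μ) :=
            Real.rpow_le_rpow_of_nonpos hr0 hxrle (by linarith)
          have h11 : r ^ (amin - 2 - 2 * μ) = s ^ γ := by
            rw [hrpow, hγdef]
          have h8 : ‖x‖ ^ (-2 - 2 * μ) ≤ s ^ γ * ‖x‖ ^ (-amin) := by
            calc ‖x‖ ^ (-2 - 2 * μ) = ‖x‖ ^ (amin - 2 - 2 * μ) * ‖x‖ ^ (-amin) := h9
              _ ≤ r ^ (amin - 2 - 2 * μ) * ‖x‖ ^ (-amin) :=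
                  mul_le_mul_of_nonneg_right h10 (Real.rpow_nonneg (norm_nonneg x) _)
              _ = s ^ γ * ‖x‖ ^ (-amin) := by rw [h11]
          calc ((2 * C₀ * K + C₁) * ‖x‖ ^ (-1 - μ)) ^ 2
              = C₂ * (‖x‖ ^ (-1 - μ)) ^ 2 := by rw [hC₂def]; ring
            _ = C₂ * ‖x‖ ^ (-2 - 2 * μ) := by rw [h7]
            _ ≤ C₂ * (s ^ γ * ‖x‖ ^ (-amin)) := mul_le_mul_of_nonneg_left h8 hC₂0
        have hstep : F x ≤ ENNReal.ofReal (C₀ ^ 2) * ENNReal.ofReal (‖x‖ ^ (-(2 * μ)))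
            + ENNReal.ofReal (C₂ * s ^ γ) * ENNReal.ofReal (‖x‖ ^ (-amin)) := by
          simp only [hFdef]
          refine add_le_add ?_ ?_
          · refine (sq_bound' hwfar).trans ?_
            rw [hsqw, ENNReal.ofReal_mul (by positivity)]
          · refine ((sq_bound' hgfar).trans (ENNReal.ofReal_le_ofReal hsqg)).trans ?_
            rw [show C₂ * (s ^ γ * ‖x‖ ^ (-amin)) = (C₂ * s ^ γ) * ‖x‖ ^ (-amin) by ring,
              ENNReal.ofReal_mul (by positivity)]
        refine hstep.trans ?_
        simp only [hΨdef]
        exact add_le_add (le_add_self) le_rfl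
    have hF0 : ∀ x : EuclideanSpace ℝ (Fin d), 2 ≤ ‖x‖ → F x = 0 := by
      intro x hx2
      have hx0 : x ≠ 0 := by
        intro h
        rw [h, norm_zero] at hx2
        linarith
      have hUx : U x = 0 := by
        simp only [hUdef]
        rw [hη0 x hx2]
        simp
      have hDx : fderiv ℝ U x = 0 := by
        rw [hDf x hx0]
        simp only [hDdef]
        rw [hη0 x hx2, hηfd0 x hx2]
        simp only [Complex.ofReal_zero, zero_smul, ContinuousLinearMap.comp_zero, smul_zero,
          add_zero]
        ext v
        simp
      simp only [hFdef]
      rw [hUx, hDx]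
      simp [ENNReal.zero_rpow_of_pos]
    -- assemble the inner integral bound
    calc ∫⁻ x, F x
        = (∫⁻ x in Metric.ball (0 : EuclideanSpace ℝ (Fin d)) 2, F x)
          + ∫⁻ x in (Metric.ball (0 : EuclideanSpace ℝ (Fin d)) 2)ᶜ, F x :=
          (lintegral_add_compl F measurableSet_ball).symm
      _ = ∫⁻ x in Metric.ball (0 : EuclideanSpace ℝ (Fin d)) 2, F x := by
          have hz : ∫⁻ x in (Metric.ball (0 : EuclideanSpace ℝ (Fin d)) 2)ᶜ, F x = 0 := by
            refine le_antisymm ?_ (by positivity)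
            refine le_trans (setLIntegral_mono' (g := fun _ => (0 : ℝ≥0∞))
              measurableSet_ball.compl (fun x hx => ?_)) (by simp)
            have h2x : 2 ≤ ‖x‖ := by
              have := hx
              simp only [mem_compl_iff, Metric.mem_ball, dist_zero_right, not_lt] at this
              exact this
            rw [hF0 x h2x]
          rw [hz, add_zero]
      _ ≤ ∫⁻ x in Metric.ball (0 : EuclideanSpace ℝ (Fin d)) 2, Ψ x := by
          refine setLIntegral_mono_ae' measurableSet_ball ?_
          have hae : ∀ᵐ x : EuclideanSpace ℝ (Fin d) ∂volume, x ≠ 0 := by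
            rw [ae_iff]
            simpa using hsing
          filter_upwards [hae] with x hx0 hxm
          exact hFΨ x hx0 (by simpa [Metric.mem_ball, dist_zero_right] using hxm)
      _ ≤ g t := by
          have hm1 : Measurable fun x : EuclideanSpace ℝ (Fin d) =>
              (Metric.closedBall (0 : EuclideanSpace ℝ (Fin d)) r).indicator
                (fun _ => ENNReal.ofReal (A₀ * s ^ (-μ - 1))) x :=
            measurable_const.indicator measurableSet_closedBall
          have hm2 : Measurable fun x : EuclideanSpace ℝ (Fin d) =>
              ENNReal.ofReal (C₀ ^ 2) * ENNReal.ofReal (‖x‖ ^ (-(2 * μ))) :=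
            ((measurable_norm.pow measurable_const).ennreal_ofReal).const_mul _
          simp only [hΨdef]
          rw [lintegral_add_left (f := fun x => (Metric.closedBall (0 : EuclideanSpace ℝ (Fin d)) r).indicator
              (fun _ => ENNReal.ofReal (A₀ * s ^ (-μ - 1))) x
              + ENNReal.ofReal (C₀ ^ 2) * ENNReal.ofReal (‖x‖ ^ (-(2 * μ)))) (hm1.add hm2),
            lintegral_add_left hm1]
          rw [hgdef]
          refine add_le_add (add_le_add ?_ ?_) ?_
          · -- indicator term
            refine le_trans (setLIntegral_le_lintegral _ _) ?_
            rw [lintegral_indicator_const measurableSet_closedBall,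
              Measure.addHaar_closedBall _ _ hr0.le, finrank_euclideanSpace_fin]
            rw [← mul_assoc, ← ENNReal.ofReal_mul (by positivity), ← hVdef]
            refine mul_le_mul_of_nonneg_right ?_ (by positivity) |>.trans le_rfl
            refine le_of_eq ?_
            congr 1
            rw [mul_assoc]
            congr 1
            rw [← Real.rpow_natCast r d, hrpow, hmul]
            congr 1
            ring
          · rw [lintegral_const_mul _ ((measurable_norm.pow measurable_const).ennreal_ofReal),
              ← hI2def]
          · rw [lintegral_const_mul _ ((measurable_norm.pow measurable_const).ennreal_ofReal),
              ← hIadef]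
  refine (setLIntegral_mono' measurableSet_Ioo key).trans_lt ?_
  have hmeas1 : Measurable fun t : ℝ => ENNReal.ofReal (A₀ * (1 - t) ^ ((d : ℝ) / 2 - μ - 1)) :=
    (((measurable_const.sub measurable_id).pow measurable_const).const_mul A₀).ennreal_ofReal
  have hmeas3 : Measurable fun t : ℝ => ENNReal.ofReal (C₂ * (1 - t) ^ γ) :=
    (((measurable_const.sub measurable_id).pow measurable_const).const_mul C₂).ennreal_ofReal
  rw [hgdef]
  beta_reduce
  rw [lintegral_add_left (f := fun t => ENNReal.ofReal (A₀ * (1 - t) ^ ((d : ℝ) / 2 - μ - 1)) * V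
    + ENNReal.ofReal (C₀ ^ 2) * I2) ((hmeas1.mul_const V).add measurable_const)]
  rw [lintegral_add_left (hmeas1.mul_const V)]
  refine ENNReal.add_lt_top.2 ⟨ENNReal.add_lt_top.2 ⟨?_, ?_⟩, ?_⟩
  · rw [lintegral_mul_const _ hmeas1]
    refine ENNReal.mul_lt_top ?_ hV
    have hβ : (-1 : ℝ) < (d : ℝ) / 2 - μ - 1 := by linarith
    calc ∫⁻ t in Ioo (0:ℝ) 1, ENNReal.ofReal (A₀ * (1 - t) ^ ((d : ℝ) / 2 - μ - 1))
        = ∫⁻ t in Ioo (0:ℝ) 1, ENNReal.ofReal A₀ * ENNReal.ofReal ((1 - t) ^ ((d : ℝ) / 2 - μ - 1)) := by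
          refine lintegral_congr fun t => ?_
          rw [ENNReal.ofReal_mul hA₀0]
      _ = ENNReal.ofReal A₀ * ∫⁻ t in Ioo (0:ℝ) 1, ENNReal.ofReal ((1 - t) ^ ((d : ℝ) / 2 - μ - 1)) :=
          lintegral_const_mul _ (((measurable_const.sub measurable_id).pow measurable_const).ennreal_ofReal)
      _ < ∞ := ENNReal.mul_lt_top ENNReal.ofReal_lt_top (lintegral_Ioo_one_sub_rpow_lt_top' hβ)
  · rw [setLIntegral_const]
    exact ENNReal.mul_lt_top (ENNReal.mul_lt_top ENNReal.ofReal_lt_top hI2)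
      (by simp [Real.volume_Ioo])
  · rw [lintegral_mul_const _ hmeas3]
    refine ENNReal.mul_lt_top ?_ hIa
    calc ∫⁻ t in Ioo (0:ℝ) 1, ENNReal.ofReal (C₂ * (1 - t) ^ γ)
        = ∫⁻ t in Ioo (0:ℝ) 1, ENNReal.ofReal C₂ * ENNReal.ofReal ((1 - t) ^ γ) := by
          refine lintegral_congr fun t => ?_
          rw [ENNReal.ofReal_mul hC₂0]
      _ = ENNReal.ofReal C₂ * ∫⁻ t in Ioo (0:ℝ) 1, ENNReal.ofReal ((1 - t) ^ γ) :=
          lintegral_const_mul _ (((measurable_const.sub measurable_id).pow measurable_const).ennreal_ofReal)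
      _ < ∞ := ENNReal.mul_lt_top ENNReal.ofReal_lt_top (lintegral_Ioo_one_sub_rpow_lt_top' hγ1)
end
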